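/- arXiv:2012.12039 — 2 statements merged into one kernel-verified Lean document; each statement's English description precedes it below -/
import Mathlib

section
/- Let (T, μ) be a measure space with μ a finite measure, let ε₀ > 0, and let g : [0, ε₀] × T → ℝ satisfy: (i) for each ε ∈ [0, ε₀], the function τ ↦ g(ε, τ) is measurable; (ii) there are constants 0 < c ≤ C with c ≤ g(ε, τ) ≤ C for all (ε, τ); (iii) for each τ ∈ T, the function ε ↦ g(ε, τ) is nondecreasing on [0, ε₀] and continuous at ε = 0, and ε ↦ log g(ε, τ) is concave on [0, ε₀]. Then, defining D(τ) := lim_{ε→0⁺} (g(ε,τ) − g(0,τ))/ε ∈ [0, ∞] (the limit exists in [0,∞] since the difference quotient is nonnegative and nondecreasing as ε decreases to 0), one has lim_{ε→0⁺} (1/ε)·∫_T (g(ε,τ) − g(0,τ)) dμ(τ) = ∫_T D(τ) dμ(τ), where both sides are allowed to equal +∞. -/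
open MeasureTheory Filter Set
open scoped ENNReal

/-- Interchange of the right derivative at `0` and the integral, for a family
`g(ε, τ)` which is measurable in `τ`, uniformly bounded between positive constants,
nondecreasing and log-concave in `ε ∈ [0,ε₀]`, and continuous at `ε = 0`:
the pointwise limits `D(τ) = lim_{ε→0⁺} (g(ε,τ) − g(0,τ))/ε ∈ [0,∞]` exist and
`lim_{ε→0⁺} (1/ε)·∫_T (g(ε,τ) − g(0,τ)) dμ(τ) = ∫_T D dμ`, both sides being allowed
to equal `+∞`. -/
theorem stmt4 {T : Type*} [MeasurableSpace T] (μ : Measure T) [IsFiniteMeasure μ]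
    (ε₀ : ℝ) (hε₀ : 0 < ε₀) (g : ℝ → T → ℝ) (c C : ℝ) (hc : 0 < c) (hcC : c ≤ C)
    (hmeas : ∀ ε ∈ Icc (0:ℝ) ε₀, Measurable (g ε))
    (hbound : ∀ ε ∈ Icc (0:ℝ) ε₀, ∀ τ, c ≤ g ε τ ∧ g ε τ ≤ C)
    (hmono : ∀ τ, MonotoneOn (fun ε => g ε τ) (Icc (0:ℝ) ε₀))
    (hcont : ∀ τ, ContinuousWithinAt (fun ε => g ε τ) (Icc (0:ℝ) ε₀) 0)
    (hconc : ∀ τ, ConcaveOn ℝ (Icc (0:ℝ) ε₀) (fun ε => Real.log (g ε τ))) :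
    ∃ D : T → ℝ≥0∞,
      (∀ τ, Tendsto (fun ε => ENNReal.ofReal ((g ε τ - g 0 τ) / ε))
          (nhdsWithin 0 (Ioc (0:ℝ) ε₀)) (nhds (D τ))) ∧
      Tendsto (fun ε => ENNReal.ofReal ((1 / ε) * ∫ τ, (g ε τ - g 0 τ) ∂μ))
          (nhdsWithin 0 (Ioc (0:ℝ) ε₀)) (nhds (∫⁻ τ, D τ ∂μ)) := by
  classical
  have h0s : (0:ℝ) ∈ Icc (0:ℝ) ε₀ := ⟨le_refl _, hε₀.le⟩
  have hsub : Ioc (0:ℝ) ε₀ ⊆ Icc 0 ε₀ := Ioc_subset_Icc_self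
  set h : ℝ → T → ℝ := fun ε τ => (Real.log (g ε τ) - Real.log (g 0 τ)) / ε with hhdef
  have hgpos : ∀ ε ∈ Icc (0:ℝ) ε₀, ∀ τ, 0 < g ε τ :=
    fun ε hε τ => hc.trans_le (hbound ε hε τ).1
  have hg0le : ∀ ε ∈ Ioc (0:ℝ) ε₀, ∀ τ, g 0 τ ≤ g ε τ :=
    fun ε hε τ => hmono τ h0s (hsub hε) hε.1.le
  -- h is nonnegative
  have hhnn : ∀ ε ∈ Ioc (0:ℝ) ε₀, ∀ τ, 0 ≤ h ε τ := by
    intro ε hε τ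
    apply div_nonneg _ hε.1.le
    have := Real.log_le_log (hgpos 0 h0s τ) (hg0le ε hε τ)
    linarith
  -- h is antitone in ε (slopes of the concave function log g from the point 0)
  have hhanti : ∀ τ, ∀ ε ∈ Ioc (0:ℝ) ε₀, ∀ ε' ∈ Ioc (0:ℝ) ε₀, ε ≤ ε' →
      h ε' τ ≤ h ε τ := by
    intro τ ε hε ε' hε' hle
    have key := ((hconc τ).neg).secant_mono h0s (hsub hε) (hsub hε') hε.1.ne' hε'.1.ne' hle
    simp only [Pi.neg_apply, sub_zero] at key
    rw [div_le_div_iff₀ hε.1 hε'.1] at key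
    show (Real.log (g ε' τ) - Real.log (g 0 τ)) / ε' ≤
      (Real.log (g ε τ) - Real.log (g 0 τ)) / ε
    rw [div_le_div_iff₀ hε'.1 hε.1]
    nlinarith [key]
  -- the fundamental two-sided bound on the difference quotient
  have hA : ∀ ε ∈ Ioc (0:ℝ) ε₀, ∀ τ,
      g 0 τ * h ε τ ≤ (g ε τ - g 0 τ) / ε ∧ (g ε τ - g 0 τ) / ε ≤ g ε τ * h ε τ := by
    intro ε hε τ
    have hg0 : 0 < g 0 τ := hgpos 0 h0s τ
    have hgε : 0 < g ε τ := hgpos ε (hsub hε) τ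
    have h1 : Real.log (g ε τ / g 0 τ) ≤ g ε τ / g 0 τ - 1 :=
      Real.log_le_sub_one_of_pos (div_pos hgε hg0)
    have h2 : Real.log (g 0 τ / g ε τ) ≤ g 0 τ / g ε τ - 1 :=
      Real.log_le_sub_one_of_pos (div_pos hg0 hgε)
    rw [Real.log_div hgε.ne' hg0.ne'] at h1
    rw [Real.log_div hg0.ne' hgε.ne'] at h2
    have e1 : g 0 τ * (g ε τ / g 0 τ - 1) = g ε τ - g 0 τ := by field_simp
    have e2 : g ε τ * (g 0 τ / g ε τ - 1) = g 0 τ - g ε τ := by field_simp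
    have i1 : g 0 τ * (Real.log (g ε τ) - Real.log (g 0 τ)) ≤ g ε τ - g 0 τ := by
      nlinarith [mul_le_mul_of_nonneg_left h1 hg0.le]
    have i2 : g ε τ - g 0 τ ≤ g ε τ * (Real.log (g ε τ) - Real.log (g 0 τ)) := by
      nlinarith [mul_le_mul_of_nonneg_left h2 hgε.le]
    constructor
    · show g 0 τ * ((Real.log (g ε τ) - Real.log (g 0 τ)) / ε) ≤ _
      rw [mul_div_assoc']
      exact (div_le_div_iff_of_pos_right hε.1).2 i1
    · show _ ≤ g ε τ * ((Real.log (g ε τ) - Real.log (g 0 τ)) / ε)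
      rw [mul_div_assoc']
      exact (div_le_div_iff_of_pos_right hε.1).2 i2
  -- the approximating sequence εₙ = ε₀ / (n+1)
  set seq : ℕ → ℝ := fun n => ε₀ / (n + 1) with hseqdef
  have hseqmem : ∀ n, seq n ∈ Ioc (0:ℝ) ε₀ := by
    intro n
    constructor
    · positivity
    · rw [div_le_iff₀ (by positivity)]
      nlinarith [Nat.cast_nonneg (α := ℝ) n, hε₀]
  have hseqanti : ∀ m n : ℕ, m ≤ n → seq n ≤ seq m := by
    intro m n hmn
    apply div_le_div_of_nonneg_left hε₀.le (by positivity)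
    have : (m : ℝ) ≤ n := Nat.cast_le.2 hmn
    linarith
  have hseqto : Tendsto seq atTop (nhds 0) := by
    have := tendsto_one_div_add_atTop_nhds_zero_nat (𝕜 := ℝ)
    have h2 := this.const_mul ε₀
    simp only [mul_zero] at h2
    refine h2.congr fun n => ?_
    rw [hseqdef]
    ring
  have hseqle : ∀ ε : ℝ, 0 < ε → ∃ n, seq n ≤ ε := by
    intro ε hε
    obtain ⟨n, hn⟩ := exists_nat_gt (ε₀ / ε)
    refine ⟨n, ?_⟩
    rw [hseqdef, div_le_iff₀ (by positivity)]
    rw [div_lt_iff₀ hε] at hn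
    nlinarith [hε.le]
  -- the limit L and the derivative D
  set L : T → ℝ≥0∞ := fun τ => ⨆ n, ENNReal.ofReal (h (seq n) τ) with hLdef
  set D : T → ℝ≥0∞ := fun τ => ENNReal.ofReal (g 0 τ) * L τ with hDdef
  have hLub : ∀ τ, ∀ ε ∈ Ioc (0:ℝ) ε₀, ENNReal.ofReal (h ε τ) ≤ L τ := by
    intro τ ε hε
    obtain ⟨n, hn⟩ := hseqle ε hε.1
    exact le_iSup_of_le n
      (ENNReal.ofReal_le_ofReal (hhanti τ (seq n) (hseqmem n) ε hε hn))
  -- ofReal ∘ h tends to L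
  have hhtendsto : ∀ τ, Tendsto (fun ε => ENNReal.ofReal (h ε τ))
      (nhdsWithin 0 (Ioc (0:ℝ) ε₀)) (nhds (L τ)) := by
    intro τ
    rw [tendsto_order]
    constructor
    · intro a ha
      obtain ⟨n, hn⟩ := lt_iSup_iff.1 ha
      have h1 : ∀ᶠ ε in nhdsWithin (0:ℝ) (Ioc (0:ℝ) ε₀), ε ≤ seq n :=
        (((gt_mem_nhds (hseqmem n).1).filter_mono nhdsWithin_le_nhds).mono
          fun x hx => hx.le)
      filter_upwards [h1, self_mem_nhdsWithin] with ε hle hmem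
      exact hn.trans_le
        (ENNReal.ofReal_le_ofReal (hhanti τ ε hmem (seq n) (hseqmem n) hle))
    · intro a ha
      filter_upwards [self_mem_nhdsWithin] with ε hε
      exact (hLub τ ε hε).trans_lt ha
  -- ofReal ∘ g tends to ofReal (g 0)
  have hgt : ∀ τ, Tendsto (fun ε => ENNReal.ofReal (g ε τ))
      (nhdsWithin 0 (Ioc (0:ℝ) ε₀)) (nhds (ENNReal.ofReal (g 0 τ))) := by
    intro τ
    exact (ENNReal.continuous_ofReal.tendsto _).comp
      ((hcont τ).mono_left (nhdsWithin_mono _ hsub))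
  have hg0ne : ∀ τ, ENNReal.ofReal (g 0 τ) ≠ 0 :=
    fun τ => (ENNReal.ofReal_pos.2 (hgpos 0 h0s τ)).ne'
  -- pointwise convergence of the difference quotients to D
  have hDt : ∀ τ, Tendsto (fun ε => ENNReal.ofReal ((g ε τ - g 0 τ) / ε))
      (nhdsWithin 0 (Ioc (0:ℝ) ε₀)) (nhds (D τ)) := by
    intro τ
    have hlow : Tendsto (fun ε => ENNReal.ofReal (g 0 τ) * ENNReal.ofReal (h ε τ))
        (nhdsWithin 0 (Ioc (0:ℝ) ε₀)) (nhds (D τ)) :=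
      ENNReal.Tendsto.const_mul (hhtendsto τ) (Or.inr ENNReal.ofReal_ne_top)
    have hup : Tendsto (fun ε => ENNReal.ofReal (g ε τ) * ENNReal.ofReal (h ε τ))
        (nhdsWithin 0 (Ioc (0:ℝ) ε₀)) (nhds (D τ)) :=
      ENNReal.Tendsto.mul (hgt τ) (Or.inl (hg0ne τ)) (hhtendsto τ)
        (Or.inr ENNReal.ofReal_ne_top)
    refine tendsto_of_tendsto_of_tendsto_of_le_of_le' hlow hup ?_ ?_
    · filter_upwards [self_mem_nhdsWithin] with ε hε
      rw [← ENNReal.ofReal_mul (hgpos 0 h0s τ).le]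
      exact ENNReal.ofReal_le_ofReal (hA ε hε τ).1
    · filter_upwards [self_mem_nhdsWithin] with ε hε
      rw [← ENNReal.ofReal_mul (hgpos ε (hsub hε) τ).le]
      exact ENNReal.ofReal_le_ofReal (hA ε hε τ).2
  -- measurability
  have hmeas_h : ∀ ε ∈ Ioc (0:ℝ) ε₀, Measurable (fun τ => ENNReal.ofReal (h ε τ)) := by
    intro ε hε
    exact ENNReal.measurable_ofReal.comp
      (((Real.measurable_log.comp (hmeas ε (hsub hε))).sub
        (Real.measurable_log.comp (hmeas 0 h0s))).div_const ε)
  have hLmeas : Measurable L :=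
    Measurable.iSup fun n => hmeas_h (seq n) (hseqmem n)
  -- rewrite the integral expression as a lintegral, eventually
  have hFeq : ∀ᶠ ε in nhdsWithin (0:ℝ) (Ioc (0:ℝ) ε₀),
      ENNReal.ofReal ((1 / ε) * ∫ τ, (g ε τ - g 0 τ) ∂μ)
        = ∫⁻ τ, ENNReal.ofReal ((g ε τ - g 0 τ) / ε) ∂μ := by
    filter_upwards [self_mem_nhdsWithin] with ε hε
    have hint : Integrable (fun τ => g ε τ - g 0 τ) μ := by
      refine Integrable.mono' (integrable_const (C - c))
        (((hmeas ε (hsub hε)).sub (hmeas 0 h0s)).aestronglyMeasurable)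
        (ae_of_all _ fun τ => ?_)
      rw [Real.norm_eq_abs, abs_of_nonneg (sub_nonneg.2 (hg0le ε hε τ))]
      linarith [(hbound ε (hsub hε) τ).2, (hbound 0 h0s τ).1]
    rw [← integral_const_mul]
    have heq : ∀ τ, 1 / ε * (g ε τ - g 0 τ) = (g ε τ - g 0 τ) / ε :=
      fun τ => one_div_mul_eq_div ε _
    simp only [heq]
    exact ofReal_integral_eq_lintegral_ofReal (hint.div_const ε)
      (ae_of_all _ fun τ => div_nonneg (sub_nonneg.2 (hg0le ε hε τ)) hε.1.le)
  refine ⟨D, hDt, Tendsto.congr' (Filter.EventuallyEq.symm hFeq) ?_⟩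
  -- main convergence of the lintegrals
  rw [tendsto_order]
  constructor
  · -- lower bound via monotone convergence
    intro a ha
    have hDeq : ∫⁻ τ, D τ ∂μ
        = ⨆ n, ∫⁻ τ, ENNReal.ofReal (g 0 τ) * ENNReal.ofReal (h (seq n) τ) ∂μ := by
      have hmc : ∀ n : ℕ, Measurable
          (fun τ => ENNReal.ofReal (g 0 τ) * ENNReal.ofReal (h (seq n) τ)) :=
        fun n => (ENNReal.measurable_ofReal.comp (hmeas 0 h0s)).mul
          (hmeas_h (seq n) (hseqmem n))
      have hmono' : Monotone (fun n : ℕ =>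
          (fun τ => ENNReal.ofReal (g 0 τ) * ENNReal.ofReal (h (seq n) τ))) :=
        fun m n hmn τ => mul_le_mul_right
          (ENNReal.ofReal_le_ofReal
            (hhanti τ (seq n) (hseqmem n) (seq m) (hseqmem m) (hseqanti m n hmn))) _
      rw [← lintegral_iSup hmc hmono']
      refine lintegral_congr fun τ => ?_
      rw [hDdef, hLdef]
      simp only
      rw [ENNReal.mul_iSup]
    rw [hDeq] at ha
    obtain ⟨n, hn⟩ := lt_iSup_iff.1 ha
    have h1 : ∀ᶠ ε in nhdsWithin (0:ℝ) (Ioc (0:ℝ) ε₀), ε ≤ seq n :=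
      (((gt_mem_nhds (hseqmem n).1).filter_mono nhdsWithin_le_nhds).mono
        fun x hx => hx.le)
    filter_upwards [h1, self_mem_nhdsWithin] with ε hle hmem
    have step1 : ∫⁻ τ, ENNReal.ofReal (g 0 τ) * ENNReal.ofReal (h (seq n) τ) ∂μ
        ≤ ∫⁻ τ, ENNReal.ofReal (g 0 τ) * ENNReal.ofReal (h ε τ) ∂μ :=
      lintegral_mono fun τ => mul_le_mul_right
        (ENNReal.ofReal_le_ofReal (hhanti τ ε hmem (seq n) (hseqmem n) hle)) _
    have step2 : ∫⁻ τ, ENNReal.ofReal (g 0 τ) * ENNReal.ofReal (h ε τ) ∂μ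
        ≤ ∫⁻ τ, ENNReal.ofReal ((g ε τ - g 0 τ) / ε) ∂μ := by
      refine lintegral_mono fun τ => ?_
      rw [← ENNReal.ofReal_mul (hgpos 0 h0s τ).le]
      exact ENNReal.ofReal_le_ofReal (hA ε hmem τ).1
    exact hn.trans_le (step1.trans step2)
  · -- upper bound via dominated convergence
    intro a ha
    have hDfin : ∫⁻ τ, D τ ∂μ ≠ ⊤ := ha.ne_top
    have hLfin : ∫⁻ τ, L τ ∂μ ≠ ⊤ := by
      intro htop
      have hle : ∫⁻ τ, ENNReal.ofReal c * L τ ∂μ ≤ ∫⁻ τ, D τ ∂μ :=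
        lintegral_mono fun τ => mul_le_mul_left
          (ENNReal.ofReal_le_ofReal (hbound 0 h0s τ).1) _
      rw [lintegral_const_mul _ hLmeas, htop,
        ENNReal.mul_top ((ENNReal.ofReal_pos.2 hc).ne')] at hle
      exact hDfin (top_le_iff.1 hle)
    have hLae : ∀ᵐ τ ∂μ, L τ < ⊤ := ae_lt_top hLmeas hLfin
    have hΦ : Tendsto (fun n => ∫⁻ τ, ENNReal.ofReal (g (seq n) τ) * L τ ∂μ)
        atTop (nhds (∫⁻ τ, D τ ∂μ)) := by
      refine tendsto_lintegral_of_dominated_convergence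
        (fun τ => ENNReal.ofReal C * L τ)
        (fun n => (ENNReal.measurable_ofReal.comp
          (hmeas (seq n) (hsub (hseqmem n)))).mul hLmeas)
        (fun n => ae_of_all _ fun τ => mul_le_mul_left
          (ENNReal.ofReal_le_ofReal (hbound (seq n) (hsub (hseqmem n)) τ).2) _)
        ?_ ?_
      · rw [lintegral_const_mul _ hLmeas]
        exact ENNReal.mul_ne_top ENNReal.ofReal_ne_top hLfin
      · filter_upwards [hLae] with τ hτ
        have hseqIcc : Tendsto seq atTop (nhdsWithin 0 (Icc (0:ℝ) ε₀)) := by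
          rw [tendsto_nhdsWithin_iff]
          exact ⟨hseqto, Eventually.of_forall fun n => hsub (hseqmem n)⟩
        have hgt2 : Tendsto (fun n => ENNReal.ofReal (g (seq n) τ)) atTop
            (nhds (ENNReal.ofReal (g 0 τ))) :=
          (ENNReal.continuous_ofReal.tendsto _).comp (Filter.Tendsto.comp (hcont τ) hseqIcc)
        exact ENNReal.Tendsto.mul_const hgt2 (Or.inr hτ.ne)
    obtain ⟨n, hn⟩ := (hΦ.eventually (gt_mem_nhds ha)).exists
    have h1 : ∀ᶠ ε in nhdsWithin (0:ℝ) (Ioc (0:ℝ) ε₀), ε ≤ seq n :=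
      (((gt_mem_nhds (hseqmem n).1).filter_mono nhdsWithin_le_nhds).mono
        fun x hx => hx.le)
    filter_upwards [h1, self_mem_nhdsWithin] with ε hle hmem
    have step1 : ∫⁻ τ, ENNReal.ofReal ((g ε τ - g 0 τ) / ε) ∂μ
        ≤ ∫⁻ τ, ENNReal.ofReal (g ε τ) * ENNReal.ofReal (h ε τ) ∂μ := by
      refine lintegral_mono fun τ => ?_
      rw [← ENNReal.ofReal_mul (hgpos ε (hsub hmem) τ).le]
      exact ENNReal.ofReal_le_ofReal (hA ε hmem τ).2
    have step2 : ∫⁻ τ, ENNReal.ofReal (g ε τ) * ENNReal.ofReal (h ε τ) ∂μ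
        ≤ ∫⁻ τ, ENNReal.ofReal (g (seq n) τ) * L τ ∂μ :=
      lintegral_mono fun τ => mul_le_mul'
        (ENNReal.ofReal_le_ofReal
          (hmono τ (hsub hmem) (hsub (hseqmem n)) hle))
        (hLub τ ε hmem)
    exact lt_of_le_of_lt (step1.trans step2) hn
end

section
/- Let R be a commutative ring, N ≥ 1 an integer, and I₀ ⊆ I₁ ⊆ ⋯ ⊆ I_{N−1} ⊆ I_N = R ideals of R. Let 𝓘 ⊆ R[t] be the ideal 𝓘 = I₀·R[t] + I₁·t·R[t] + ⋯ + I_{N−1}·t^{N−1}·R[t] + t^N·R[t]. Then: (a) 𝓘 consists exactly of the polynomials ∑_j a_j t^j with a_j ∈ I_j for all j < N; and (b) for every integer k ≥ 1, 𝓘^k consists exactly of the polynomials ∑_j a_j t^j with a_j ∈ J_{k,j} for all j < kN, where J_{k,j} := ∑ I₀^{α₀}·I₁^{α₁}·⋯·I_N^{α_N}, the sum running over all α ∈ ℕ^{N+1} with α₀ + α₁ + ⋯ + α_N = k and 0·α₀ + 1·α₁ + ⋯ + N·α_N = j. In particular, J_{k,j} ⊆ J_{k,j′} for j ≤ j′ <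 kN. -/
open Polynomial

/-- The flag ideal `𝓘 = I₀ + I₁·t + ⋯ + I_{N−1}·t^{N−1} + (t^N)` in `R[t]`
associated to a chain of ideals `I₀ ⊆ I₁ ⊆ ⋯ ⊆ I_N = R`. -/
noncomputable def flagIdeal {R : Type*} [CommRing R] (N : ℕ) (I : ℕ → Ideal R) :
    Ideal (Polynomial R) :=
  ∑ i ∈ Finset.range (N + 1),
    (Ideal.map (Polynomial.C : R →+* Polynomial R) (I i)) *
      Ideal.span {(Polynomial.X : Polynomial R) ^ i}

/-- The coefficient ideals `J_{k,j} = ∑_{α} I₀^{α₀}·⋯·I_N^{α_N}`, the sum over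
`α ∈ ℕ^{N+1}` with `∑ αᵢ = k` and `∑ i·αᵢ = j`. -/
noncomputable def coeffIdeal {R : Type*} [CommRing R] (N : ℕ) (I : ℕ → Ideal R)
    (k j : ℕ) : Ideal R :=
  ⨆ (α : Fin (N + 1) → ℕ) (_ : ∑ i : Fin (N + 1), α i = k)
    (_ : ∑ i : Fin (N + 1), (i : ℕ) * α i = j),
    ∏ i : Fin (N + 1), I (i : ℕ) ^ α i

namespace FlagAux
open Finset
variable {R : Type*} [CommRing R]

noncomputable def fIdeal (N : ℕ) (I : ℕ → Ideal R) (k j : ℕ) : Ideal R :=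
  ⨆ (f : Fin k → Fin (N + 1)) (_ : ∑ s, ((f s : ℕ)) = j), ∏ s, I (f s : ℕ)

lemma le_fIdeal {N : ℕ} {I : ℕ → Ideal R} {k j : ℕ} (f : Fin k → Fin (N + 1))
    (hf : ∑ s, ((f s : ℕ)) = j) : (∏ s, I (f s : ℕ)) ≤ fIdeal N I k j :=
  le_iSup_of_le f (le_iSup_of_le hf le_rfl)

-- general helpers
lemma sum_ideal_le {A : Type*} [CommRing A] {ι : Type*} {s : Finset ι} {f : ι → Ideal A}
    {J : Ideal A} (h : ∀ i ∈ s, f i ≤ J) : ∑ i ∈ s, f i ≤ J := by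
  classical
  induction s using Finset.cons_induction with
  | empty => simp
  | cons a s ha ih =>
      rw [Finset.sum_cons, Submodule.add_eq_sup]
      exact sup_le (h a (mem_cons_self a s)) (ih fun i hi => h i (mem_cons_of_mem hi))

lemma prod_ideal_le {A : Type*} [CommRing A] {ι : Type*} {s : Finset ι} {f g : ι → Ideal A}
    (h : ∀ i ∈ s, f i ≤ g i) : ∏ i ∈ s, f i ≤ ∏ i ∈ s, g i := by
  classical
  induction s using Finset.cons_induction with
  | empty => simp
  | cons a s ha ih =>
      rw [Finset.prod_cons, Finset.prod_cons]
      exact Ideal.mul_mono (h a (mem_cons_self a s)) (ih fun i hi => h i (mem_cons_of_mem hi))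

lemma map_C_prod {ι : Type*} (s : Finset ι) (f : ι → Ideal R) :
    Ideal.map (C : R →+* R[X]) (∏ i ∈ s, f i) = ∏ i ∈ s, Ideal.map (C : R →+* R[X]) (f i) := by
  classical
  induction s using Finset.cons_induction with
  | empty => simp [Ideal.map_top]
  | cons a s ha ih => rw [Finset.prod_cons, Finset.prod_cons, Ideal.map_mul, ih]

variable {N : ℕ} {I : ℕ → Ideal R}

lemma fIdeal_mul_le {k m a b : ℕ} :
    fIdeal N I k a * fIdeal N I m b ≤ fIdeal N I (k + m) (a + b) := by
  rw [fIdeal, Submodule.iSup_mul]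
  refine iSup_le fun f => ?_
  rw [Submodule.iSup_mul]
  refine iSup_le fun hf => ?_
  rw [fIdeal, Submodule.mul_iSup]
  refine iSup_le fun g => ?_
  rw [Submodule.mul_iSup]
  refine iSup_le fun hg => ?_
  refine le_trans (le_of_eq ?_) (le_fIdeal (Fin.append f g) ?_)
  · rw [Fin.prod_univ_add]
    simp [Fin.append_left, Fin.append_right]
  · rw [Fin.sum_univ_add]
    simp [Fin.append_left, Fin.append_right, hf, hg]

lemma fIdeal_top (htop : I N = ⊤) (k : ℕ) : fIdeal N I k (k * N) = ⊤ := by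
  refine le_antisymm le_top ?_
  have hsum : ∑ _s : Fin k, (((⟨N, Nat.lt_succ_self N⟩ : Fin (N + 1)) : ℕ)) = k * N := by
    simp [Finset.sum_const, Finset.card_univ, mul_comm]
  have h := le_fIdeal (N := N) (I := I) (k := k)
    (fun _ => (⟨N, Nat.lt_succ_self N⟩ : Fin (N + 1))) hsum
  refine le_trans (le_of_eq ?_) h
  simp [htop, Finset.prod_const, Ideal.top_pow]

noncomputable def Efun (N : ℕ) (I : ℕ → Ideal R) (k j : ℕ) : Ideal R :=
  if j < k * N then fIdeal N I k j else ⊤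

lemma Efun_pos {k j : ℕ} (h : j < k * N) : Efun N I k j = fIdeal N I k j := if_pos h

lemma Efun_neg {k j : ℕ} (h : ¬ j < k * N) : Efun N I k j = ⊤ := if_neg h

lemma fIdeal_step (hchain : ∀ i j : ℕ, i ≤ j → j ≤ N → I i ≤ I j) {k j : ℕ} (hj : j < k * N) :
    fIdeal N I k j ≤ fIdeal N I k (j + 1) := by
  classical
  refine iSup_le fun f => iSup_le fun hf => ?_
  have hex : ∃ s, (f s : ℕ) < N := by
    by_contra h
    push_neg at h
    have h1 : ∀ s, (f s : ℕ) = N := fun s => le_antisymm (Nat.lt_succ_iff.mp (f s).2) (h s)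
    have h2 : ∑ s : Fin k, ((f s : ℕ)) = k * N := by
      simp [h1, Finset.sum_const, Finset.card_univ, mul_comm]
    omega
  obtain ⟨s, hs⟩ := hex
  set v : Fin (N + 1) := ⟨(f s : ℕ) + 1, by omega⟩ with hv
  have hvval : (v : ℕ) = (f s : ℕ) + 1 := rfl
  set f' : Fin k → Fin (N + 1) := Function.update f s v with hf'
  have hcompN : (fun t => ((f' t : ℕ))) = Function.update (fun t => ((f t : ℕ))) s ((v : ℕ)) := by
    funext t
    by_cases ht : t = s
    · subst ht; simp [hf']
    · simp [hf', Function.update_of_ne ht]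
  have hcompI : (fun t => I ((f' t : ℕ)))
      = Function.update (fun t => I ((f t : ℕ))) s (I (v : ℕ)) := by
    funext t
    by_cases ht : t = s
    · subst ht; simp [hf']
    · simp [hf', Function.update_of_ne ht]
  have hsum' : ∑ t, ((f' t : ℕ)) = j + 1 := by
    rw [hcompN, Finset.sum_update_of_mem (mem_univ s)]
    have h2 : ∑ t, ((f t : ℕ)) = (∑ t ∈ univ \ {s}, ((f t : ℕ))) + (f s : ℕ) :=
      Finset.sum_eq_sum_sdiff_singleton_add (mem_univ s) _
    omega
  refine le_trans ?_ (le_fIdeal f' hsum')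
  calc ∏ t, I ((f t : ℕ))
      = (∏ t ∈ univ \ {s}, I ((f t : ℕ))) * I ((f s : ℕ)) :=
        Finset.prod_eq_prod_diff_singleton_mul (mem_univ s) _
    _ ≤ (∏ t ∈ univ \ {s}, I ((f t : ℕ))) * I ((v : ℕ)) := by
        refine Ideal.mul_mono le_rfl ?_
        rw [hvval]
        exact hchain _ _ (by omega) (by omega)
    _ = ∏ t, I ((f' t : ℕ)) := by
        rw [hcompI, Finset.prod_update_of_mem (mem_univ s), mul_comm]

lemma fIdeal_mono (hchain : ∀ i j : ℕ, i ≤ j → j ≤ N → I i ≤ I j) {k j j' : ℕ}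
    (h1 : j ≤ j') (h2 : j' ≤ k * N) : fIdeal N I k j ≤ fIdeal N I k j' := by
  induction j', h1 using Nat.le_induction with
  | base => exact le_rfl
  | succ m hm ih => exact (ih (by omega)).trans (fIdeal_step hchain (by omega))

lemma fIdeal_one {j : ℕ} (hj : j ≤ N) : fIdeal N I 1 j = I j := by
  apply le_antisymm
  · refine iSup_le fun f => iSup_le fun hf => ?_
    have : (f 0 : ℕ) = j := by simpa using hf
    rw [Fin.prod_univ_one, this]
  · refine le_trans (le_of_eq ?_) (le_fIdeal (fun _ => (⟨j, by omega⟩ : Fin (N+1))) (by simp))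
    rw [Fin.prod_univ_one]

lemma Efun_mono (hchain : ∀ i j : ℕ, i ≤ j → j ≤ N → I i ≤ I j) (k : ℕ) :
    Monotone (Efun N I k) := by
  intro j j' h
  unfold Efun
  by_cases h2 : j' < k * N
  · have h1 : j < k * N := by omega
    rw [if_pos h1, if_pos h2]
    exact fIdeal_mono hchain h (by omega)
  · rw [if_neg h2]; exact le_top

noncomputable def Fideal (E : ℕ → Ideal R) (hE : Monotone E) : Ideal R[X] where
  carrier := {p | ∀ j, p.coeff j ∈ E j}
  add_mem' := fun hp hq j => by simpa [coeff_add] using add_mem (hp j) (hq j)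
  zero_mem' := fun j => by simp
  smul_mem' := fun c p hp => by
    intro j
    rw [smul_eq_mul, Polynomial.coeff_mul]
    refine Submodule.sum_mem _ fun x hx => ?_
    have hb : x.2 ≤ j := by
      have := Finset.HasAntidiagonal.mem_antidiagonal.mp hx
      omega
    exact Ideal.mul_mem_left _ _ (hE hb (hp x.2))

lemma mem_Fideal {E : ℕ → Ideal R} {hE : Monotone E} {p : R[X]} :
    p ∈ Fideal E hE ↔ ∀ j, p.coeff j ∈ E j := Iff.rfl

lemma summand_le_flag {i : ℕ} (hi : i ∈ Finset.range (N + 1)) :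
    Ideal.map (C : R →+* R[X]) (I i) * Ideal.span {(X : R[X]) ^ i} ≤ flagIdeal N I :=
  Finset.single_le_sum (f := fun i =>
    Ideal.map (C : R →+* R[X]) (I i) * Ideal.span {(X : R[X]) ^ i}) (fun _ _ => zero_le) hi

lemma span_XN_le_flag (htop : I N = ⊤) :
    Ideal.span {(X : R[X]) ^ N} ≤ flagIdeal N I := by
  have h := summand_le_flag (N := N) (I := I) (i := N) (Finset.mem_range.mpr (by omega))
  rwa [htop, Ideal.map_top, Ideal.top_mul] at h

lemma prod_summand_le_pow (k : ℕ) (f : Fin k → Fin (N + 1)) :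
    (∏ s, (Ideal.map (C : R →+* R[X]) (I ((f s : ℕ))) * Ideal.span {(X : R[X]) ^ ((f s : ℕ))}))
      ≤ flagIdeal N I ^ k := by
  refine le_trans (prod_ideal_le (g := fun _ => flagIdeal N I) fun s _ =>
    summand_le_flag (Finset.mem_range.mpr (f s).2)) ?_
  rw [Finset.prod_const, Finset.card_univ, Fintype.card_fin]

lemma monomial_mem (hchain : ∀ i j : ℕ, i ≤ j → j ≤ N → I i ≤ I j) (htop : I N = ⊤)
    {k j : ℕ} (a : R) (ha : a ∈ Efun N I k j) :
    (monomial j a : R[X]) ∈ flagIdeal N I ^ k := by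
  by_cases hj : j < k * N
  · have ha' : a ∈ fIdeal N I k j := by simpa [Efun, hj] using ha
    refine Submodule.iSup_induction _ (motive := fun x => (monomial j x : R[X]) ∈ flagIdeal N I ^ k)
      ha' ?_ (by simp) ?_
    · intro f x hx
      by_cases hc : ∑ s, ((f s : ℕ)) = j
      · rw [iSup_pos hc] at hx
        have h1 : (C x : R[X]) ∈ ∏ s, Ideal.map (C : R →+* R[X]) (I ((f s : ℕ))) := by
          rw [← map_C_prod]
          exact Ideal.mem_map_of_mem _ hx
        have h2 : (X : R[X]) ^ j ∈ ∏ s, Ideal.span {(X : R[X]) ^ ((f s : ℕ))} := by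
          rw [Ideal.prod_span_singleton, Finset.prod_pow_eq_pow_sum, hc]
          exact Ideal.mem_span_singleton_self _
        have h3 := Ideal.mul_mem_mul h1 h2
        rw [← Finset.prod_mul_distrib] at h3
        have h4 := prod_summand_le_pow k f h3
        rwa [C_mul_X_pow_eq_monomial] at h4
      · rw [iSup_neg hc] at hx
        simp [(Submodule.mem_bot _).mp hx]
    · intro x y hx hy
      rw [map_add]
      exact add_mem hx hy
  · have he : j - k * N + N * k = j := by
      rw [Nat.mul_comm N k]
      omega
    have hrw : (monomial j a : R[X]) = C a * X ^ (j - k * N) * ((X : R[X]) ^ N) ^ k := by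
      rw [← pow_mul, mul_assoc, ← pow_add, he, C_mul_X_pow_eq_monomial]
    rw [hrw]
    exact Ideal.mul_mem_left _ _ (Ideal.pow_mem_pow
      ((span_XN_le_flag htop) (Ideal.mem_span_singleton_self _)) k)

lemma coeffIdeal_eq_fIdeal (N : ℕ) (I : ℕ → Ideal R) (k j : ℕ) :
    coeffIdeal N I k j = fIdeal N I k j := by
  classical
  apply le_antisymm
  · refine iSup_le fun α => iSup_le fun hk => iSup_le fun hj => ?_
    have hcard : Fintype.card ((i : Fin (N+1)) × Fin (α i)) = Fintype.card (Fin k) := by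
      simp [Fintype.card_sigma, hk]
    let e := Fintype.equivOfCardEq hcard
    refine le_trans (le_of_eq ?_) (le_fIdeal (fun s => (e.symm s).1) ?_)
    · calc ∏ i : Fin (N+1), I (i:ℕ) ^ α i
          = ∏ i : Fin (N+1), ∏ _x : Fin (α i), I (i:ℕ) := by simp
        _ = ∏ x : (i : Fin (N+1)) × Fin (α i), I (x.1 : ℕ) := by
            rw [← Finset.univ_sigma_univ, Finset.prod_sigma]
        _ = ∏ s, I (((e.symm s).1 : Fin (N+1)) : ℕ) :=
            (Equiv.prod_comp e.symm (fun x => I ((x.1 : Fin (N+1)) : ℕ))).symm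
    · calc ∑ s, (((e.symm s).1 : Fin (N+1)) : ℕ)
          = ∑ x : (i : Fin (N+1)) × Fin (α i), ((x.1 : Fin (N+1)) : ℕ) :=
            Equiv.sum_comp e.symm (fun x => ((x.1 : Fin (N+1)) : ℕ))
        _ = ∑ i : Fin (N+1), ∑ _x : Fin (α i), (i:ℕ) := by
            rw [← Finset.univ_sigma_univ, Finset.sum_sigma]
        _ = j := by simpa [mul_comm] using hj
  · refine iSup_le fun f => iSup_le fun hf => ?_
    set α : Fin (N+1) → ℕ := fun i => (univ.filter (fun s => f s = i)).card with hα
    have hk : ∑ i, α i = k := by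
      have := Finset.card_eq_sum_card_fiberwise
        (f := f) (s := univ) (t := univ) (fun x _ => mem_univ _)
      simpa [hα] using this.symm
    have hj : ∑ i : Fin (N+1), (i:ℕ) * α i = j := by
      rw [← hf, ← Finset.sum_fiberwise univ f (fun s => ((f s : ℕ)))]
      refine Finset.sum_congr rfl fun i _ => ?_
      have h1 : ∀ s ∈ univ.filter (fun s => f s = i), ((f s : ℕ)) = (i : ℕ) :=
        fun s hs => by rw [(mem_filter.mp hs).2]
      rw [Finset.sum_congr rfl h1, Finset.sum_const, smul_eq_mul, mul_comm]
    have hprod : ∏ i : Fin (N+1), I (i:ℕ) ^ α i = ∏ s, I (f s : ℕ) := by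
      rw [← Finset.prod_fiberwise univ f (fun s => I (f s : ℕ))]
      refine Finset.prod_congr rfl fun i _ => ?_
      have h1 : ∀ s ∈ univ.filter (fun s => f s = i), I ((f s : ℕ)) = I (i : ℕ) :=
        fun s hs => by rw [(mem_filter.mp hs).2]
      rw [Finset.prod_congr rfl h1, Finset.prod_const]
    exact le_iSup_of_le α (le_iSup_of_le hk (le_iSup_of_le hj hprod.ge))

lemma Efun_mul_le (hchain : ∀ i j : ℕ, i ≤ j → j ≤ N → I i ≤ I j) (htop : I N = ⊤)
    {k : ℕ} (a b : ℕ) :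
    Efun N I k a * Efun N I 1 b ≤ Efun N I (k + 1) (a + b) := by
  by_cases h : a + b < (k + 1) * N
  · have htarget : Efun N I (k + 1) (a + b) = fIdeal N I (k + 1) (a + b) := Efun_pos h
    have hNk : (k + 1) * N = k * N + N := by ring
    rw [htarget]
    by_cases ha : a < k * N <;> by_cases hb : b < 1 * N
    · rw [Efun_pos ha,
        Efun_pos hb]
      exact fIdeal_mul_le
    · rw [Efun_pos ha,
        Efun_neg hb, Ideal.mul_top]
      have h1 : fIdeal N I k a = fIdeal N I k a * fIdeal N I 1 N := by
        rw [show fIdeal N I 1 N = I N from fIdeal_one le_rfl, htop, Ideal.mul_top]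
      rw [h1]
      refine le_trans fIdeal_mul_le (fIdeal_mono hchain ?_ ?_) <;> omega
    · rw [Efun_neg ha,
        Efun_pos hb,
        show (⊤ : Ideal R) = fIdeal N I k (k * N) from (fIdeal_top htop k).symm]
      refine le_trans fIdeal_mul_le (fIdeal_mono hchain ?_ ?_) <;> omega
    · exfalso; omega
  · rw [Efun_neg h]
    exact le_top

lemma flag_le_Fideal (hchain : ∀ i j : ℕ, i ≤ j → j ≤ N → I i ≤ I j) :
    flagIdeal N I ≤ Fideal (Efun N I 1) (Efun_mono hchain 1) := by
  refine sum_ideal_le fun i _hi => ?_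
  rw [Ideal.mul_le]
  intro p hp q hq
  rw [Ideal.mem_span_singleton] at hq
  obtain ⟨r, rfl⟩ := hq
  intro j
  have hrw : p * ((X : R[X]) ^ i * r) = p * r * X ^ i := by ring
  rw [hrw, Polynomial.coeff_mul_X_pow']
  by_cases hij : i ≤ j
  · rw [if_pos hij]
    have hmem : p * r ∈ Ideal.map (C : R →+* R[X]) (I i) := Ideal.mul_mem_right _ _ hp
    have hco : (p * r).coeff (j - i) ∈ I i := Ideal.mem_map_C_iff.mp hmem _
    by_cases hjN : j < 1 * N
    · rw [Efun_pos hjN, fIdeal_one (by omega)]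
      exact hchain _ _ hij (by omega) hco
    · rw [Efun_neg hjN]; exact trivial
  · rw [if_neg hij]
    exact zero_mem _

lemma pow_le_Fideal (hchain : ∀ i j : ℕ, i ≤ j → j ≤ N → I i ≤ I j) (htop : I N = ⊤)
    {k : ℕ} (hk : 1 ≤ k) :
    flagIdeal N I ^ k ≤ Fideal (Efun N I k) (Efun_mono hchain k) := by
  induction k, hk using Nat.le_induction with
  | base => rw [pow_one]; exact flag_le_Fideal hchain
  | succ m hm ih =>
      rw [pow_succ, Ideal.mul_le]
      intro p hp q hq
      have hp' := ih hp
      have hq' := flag_le_Fideal hchain hq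
      intro j
      rw [Polynomial.coeff_mul]
      refine Submodule.sum_mem _ fun x hx => ?_
      have hx' : x.1 + x.2 = j := Finset.HasAntidiagonal.mem_antidiagonal.mp hx
      have := Efun_mul_le hchain htop (k := m) x.1 x.2
      rw [hx'] at this
      exact this (Ideal.mul_mem_mul (hp' x.1) (hq' x.2))

lemma Efun_eq_coeffIdeal {k j : ℕ} (hj : j < k * N) :
    Efun N I k j = coeffIdeal N I k j := by
  rw [coeffIdeal_eq_fIdeal, ← Efun_pos hj]

end FlagAux

/-- (a) The flag ideal `𝓘` consists exactly of the polynomials whose `j`-th coefficient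
lies in `I_j` for all `j < N`; (b) for every `k ≥ 1`, `𝓘^k` consists exactly of the
polynomials whose `j`-th coefficient lies in `J_{k,j}` for all `j < kN`; in particular
`J_{k,j} ⊆ J_{k,j′}` for `j ≤ j′ < kN`. -/
theorem stmt5 {R : Type*} [CommRing R] (N : ℕ) (hN : 1 ≤ N) (I : ℕ → Ideal R)
    (hchain : ∀ i j : ℕ, i ≤ j → j ≤ N → I i ≤ I j) (htop : I N = ⊤) :
    (∀ p : Polynomial R, p ∈ flagIdeal N I ↔ ∀ j < N, p.coeff j ∈ I j) ∧
    (∀ k : ℕ, 1 ≤ k →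
      ∀ p : Polynomial R,
        p ∈ (flagIdeal N I) ^ k ↔ ∀ j < k * N, p.coeff j ∈ coeffIdeal N I k j) ∧
    (∀ k : ℕ, 1 ≤ k → ∀ j j' : ℕ, j ≤ j' → j' < k * N →
      coeffIdeal N I k j ≤ coeffIdeal N I k j') := by
  open FlagAux in
  refine ⟨?_, ?_, ?_⟩
  · intro p
    constructor
    · intro hp j hj
      have h := flag_le_Fideal hchain hp j
      rwa [Efun_pos (show j < 1 * N by omega), fIdeal_one (by omega)] at h
    · intro h
      have hpow : p ∈ flagIdeal N I ^ 1 := by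
        rw [Polynomial.as_sum_range' p (p.natDegree + 1) (Nat.lt_succ_self _)]
        refine Submodule.sum_mem _ fun i _ => ?_
        refine monomial_mem hchain htop _ ?_
        by_cases hi : i < 1 * N
        · rw [Efun_pos hi, fIdeal_one (by omega)]
          exact h i (by omega)
        · rw [Efun_neg hi]; exact trivial
      rwa [pow_one] at hpow
  · intro k hk p
    constructor
    · intro hp j hj
      have h := pow_le_Fideal hchain htop hk hp j
      rwa [Efun_eq_coeffIdeal hj] at h
    · intro h
      rw [Polynomial.as_sum_range' p (p.natDegree + 1) (Nat.lt_succ_self _)]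
      refine Submodule.sum_mem _ fun i _ => ?_
      refine monomial_mem hchain htop _ ?_
      by_cases hi : i < k * N
      · rw [Efun_eq_coeffIdeal hi]
        exact h i hi
      · rw [Efun_neg hi]; exact trivial
  · intro k _hk j j' h1 h2
    rw [coeffIdeal_eq_fIdeal, coeffIdeal_eq_fIdeal]
    exact fIdeal_mono hchain h1 (by omega)
end
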